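/- Let F be a field of characteristic 2 and a, b, c, d ∈ F×. If the 6-dimensional bilinear Albert form ⟨a, b, ab, c, d, cd⟩ is anisotropic over F, then the symbols {a,b}₂ and {c,d}₂ in K₂(F)/2K₂(F) have no common slot: there are no e, f, g ∈ F× with {a,b}₂ = {e,f}₂ and {c,d}₂ = {e,g}₂. -/

import Mathlib

namespace Milnor

variable (F : Type*) [Field F]

/-- Relations defining the Milnor K-group `K_n(F)`: multiplicativity in each
slot and the Steinberg relation. -/
def rels (n : ℕ) : AddSubgroup (FreeAbelianGroup (Fin n → Fˣ)) :=
  AddSubgroup.closure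
    ({ x | ∃ (i : Fin n) (u v w : Fin n → Fˣ),
        (∀ j, j ≠ i → u j = v j ∧ u j = w j) ∧ w i = u i * v i ∧
        x = FreeAbelianGroup.of w - FreeAbelianGroup.of u - FreeAbelianGroup.of v } ∪
     { x | ∃ (i j : Fin n) (u : Fin n → Fˣ), i ≠ j ∧ (u i : F) + (u j : F) = 1 ∧
        x = FreeAbelianGroup.of u })

/-- The Milnor K-group `K_n(F)`. -/
def K (n : ℕ) := FreeAbelianGroup (Fin n → Fˣ) ⧸ rels F n

instance (n : ℕ) : AddCommGroup (K F n) :=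
  QuotientAddGroup.Quotient.addCommGroup _

/-- The subgroup `2^m K_n(F)` of `K_n(F)`. -/
def modSub (n m : ℕ) : AddSubgroup (K F n) :=
  AddSubgroup.closure { x | ∃ y : K F n, x = (2 ^ m) • y }

/-- The quotient `K_n(F)/2^m K_n(F)`. -/
def KMod (n m : ℕ) := K F n ⧸ modSub F n m

instance (n m : ℕ) : AddCommGroup (KMod F n m) :=
  QuotientAddGroup.Quotient.addCommGroup _

variable {F}

/-- The class of the symbol `{v 0, …, v (n-1)}` in `K_n(F)/2^m K_n(F)`. -/
def symbol {n : ℕ} (m : ℕ) (v : Fin n → Fˣ) : KMod F n m :=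
  QuotientAddGroup.mk (QuotientAddGroup.mk (FreeAbelianGroup.of v) : K F n)

open scoped Classical in
/-- `{a,b}` in `K₂(F)/2^m K₂(F)` for field elements, with junk value `0` if an
entry vanishes.  So `s2 1 a b` is `{a,b}₂` and `s2 2 a b` is `{a,b}₄`. -/
noncomputable def s2 (m : ℕ) (a b : F) : KMod F 2 m :=
  if h : a ≠ 0 ∧ b ≠ 0 then symbol m ![Units.mk0 a h.1, Units.mk0 b h.2] else 0

open scoped Classical in
/-- `{a,b,c,d}` in `K₄(F)/2^m K₄(F)` for field elements, junk value `0`. -/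
noncomputable def s4 (m : ℕ) (a b c d : F) : KMod F 4 m :=
  if h : a ≠ 0 ∧ b ≠ 0 ∧ c ≠ 0 ∧ d ≠ 0 then
    symbol m ![Units.mk0 a h.1, Units.mk0 b h.2.1, Units.mk0 c h.2.2.1, Units.mk0 d h.2.2.2]
  else 0

end Milnor

open Milnor


/- ====================================================================
   Auxiliary development: derivations in characteristic 2, the
   dlog-wedge invariant on K₂/2K₂, and linkage of symbols.
   ==================================================================== -/

set_option linter.unusedSectionVars false
set_option maxHeartbeats 1000000

section CommonSlot

variable {F : Type*} [Field F] [CharP F 2]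

theorem CS.two_zero : (2 : F) = 0 := by
  have := CharP.cast_eq_zero F 2; simpa using this

theorem CS.c2 (x : F) : x + x = 0 := by
  have h : (2 : F) = 0 := CS.two_zero
  linear_combination x * h

/-- A (total) derivation on `F`. -/
structure CS.IsDer (D : F → F) : Prop where
  map_add : ∀ x y, D (x + y) = D x + D y
  leibniz : ∀ x y, D (x * y) = x * D y + y * D x

namespace CS

theorem IsDer.map_one {D : F → F} (hD : IsDer D) : D 1 = 0 := by
  have h := hD.leibniz 1 1
  simp only [one_mul] at h
  have : D 1 + 0 = D 1 + D 1 := by rw [add_zero]; exact h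
  exact (add_left_cancel this).symm

theorem IsDer.map_sq {D : F → F} (hD : IsDer D) (s : F) : D (s ^ 2) = 0 := by
  have h := hD.leibniz s s
  rw [← sq] at h
  rw [h]
  exact c2 _

/-- Partial derivation: defined (with good properties) on a subfield
containing all squares, junk value `0` outside. -/
structure PDer (F : Type*) [Field F] [CharP F 2] where
  M : Subfield F
  D : F → F
  sq_mem : ∀ s : F, s ^ 2 ∈ M
  map_add : ∀ x ∈ M, ∀ y ∈ M, D (x + y) = D x + D y
  leibniz : ∀ x ∈ M, ∀ y ∈ M, D (x * y) = x * D y + y * D x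
  sq_zero : ∀ s : F, D (s ^ 2) = 0
  out_zero : ∀ x, x ∉ M → D x = 0

namespace PDer

instance : Preorder (PDer F) where
  le p q := p.M ≤ q.M ∧ ∀ x ∈ p.M, q.D x = p.D x
  le_refl p := ⟨le_rfl, fun _ _ => rfl⟩
  le_trans p q r hpq hqr :=
    ⟨le_trans hpq.1 hqr.1, fun x hx => by rw [hqr.2 x (hpq.1 hx), hpq.2 x hx]⟩

theorem le_def {p q : PDer F} : p ≤ q ↔ p.M ≤ q.M ∧ ∀ x ∈ p.M, q.D x = p.D x := Iff.rfl

theorem d_zero (p : PDer F) : p.D 0 = 0 := by have := p.sq_zero 0; simpa using this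
theorem d_one (p : PDer F) : p.D 1 = 0 := by have := p.sq_zero 1; simpa using this

/-- The trivial partial derivation on the subfield of squares. -/
noncomputable def bot (F : Type*) [Field F] [CharP F 2] : PDer F where
  M := { carrier := {x | ∃ s : F, x = s ^ 2}
         one_mem' := ⟨1, by ring⟩
         zero_mem' := ⟨0, by ring⟩
         add_mem' := by
           rintro x y ⟨s, rfl⟩ ⟨t, rfl⟩
           exact ⟨s + t, by ring_nf; rw [CS.two_zero]; ring⟩
         mul_mem' := by
           rintro x y ⟨s, rfl⟩ ⟨t, rfl⟩
           exact ⟨s * t, by ring⟩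
         neg_mem' := by
           rintro x ⟨s, rfl⟩
           exact ⟨s, by rw [CharTwo.neg_eq]⟩
         inv_mem' := by
           rintro x ⟨s, rfl⟩
           exact ⟨s⁻¹, by rw [inv_pow]⟩ }
  D := 0
  sq_mem := fun s => ⟨s, rfl⟩
  map_add := by intros; simp
  leibniz := by intros; simp
  sq_zero := by intros; simp
  out_zero := by intros; simp

theorem bot_mem_iff (x : F) : x ∈ (bot F).M ↔ ∃ s : F, x = s ^ 2 := Iff.rfl

variable (p : PDer F) (t c : F)

private def S : Set F := {x | ∃ uv : F × F, uv.1 ∈ p.M ∧ uv.2 ∈ p.M ∧ x = uv.1 + uv.2 * t}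

theorem unique_rep (ht : t ∉ p.M) {u v u' v' : F} (hu : u ∈ p.M) (hv : v ∈ p.M)
    (hu' : u' ∈ p.M) (hv' : v' ∈ p.M) (h : u + v * t = u' + v' * t) :
    u = u' ∧ v = v' := by
  by_cases hvv : v = v'
  · subst hvv
    constructor
    · have : u = u' := by
        have := add_right_cancel (a := u) (b := v * t) (c := u') h
        exact this
      exact this
    · rfl
  · exfalso
    apply ht
    have hne : v' - v ≠ 0 := fun hh => hvv (by linear_combination -hh)
    have hrep : t = (u - u') / (v' - v) := by
      rw [eq_div_iff hne]
      linear_combination -h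
    rw [hrep]
    exact Subfield.div_mem _ (Subfield.sub_mem _ hu hu') (Subfield.sub_mem _ hv' hv)

open Classical in
noncomputable def Dext : F → F := fun x =>
  if hx : x ∈ S p t then
    p.D hx.choose.1 + p.D hx.choose.2 * t + hx.choose.2 * c
  else 0

theorem Dext_spec (ht : t ∉ p.M) {u v : F} (hu : u ∈ p.M) (hv : v ∈ p.M) :
    Dext p t c (u + v * t) = p.D u + p.D v * t + v * c := by
  have hx : (u + v * t) ∈ S p t := ⟨(u, v), hu, hv, rfl⟩
  rw [Dext, dif_pos hx]
  obtain ⟨h1, h2, h3⟩ := hx.choose_spec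
  obtain ⟨e1, e2⟩ := unique_rep p t ht h1 h2 hu hv h3.symm
  rw [e1, e2]

/-- Extend a partial derivation through a square-root extension, with
prescribed value on the new generator. -/
theorem extend (ht : t ∉ p.M) (c : F) :
    ∃ q : PDer F, p ≤ q ∧ t ∈ q.M ∧ q.D t = c ∧
      ∀ x ∈ q.M, ∃ u v, u ∈ p.M ∧ v ∈ p.M ∧ x = u + v * t := by
  have htsq : t ^ 2 ∈ p.M := p.sq_mem t
  refine ⟨{ M := { carrier := S p t
                   one_mem' := ⟨(1, 0), p.M.one_mem, p.M.zero_mem, by ring⟩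
                   zero_mem' := ⟨(0, 0), p.M.zero_mem, p.M.zero_mem, by ring⟩
                   add_mem' := ?_
                   mul_mem' := ?_
                   neg_mem' := ?_
                   inv_mem' := ?_ }
            D := Dext p t c
            sq_mem := fun s => ⟨(s ^ 2, 0), p.sq_mem s, p.M.zero_mem, by ring⟩
            map_add := ?_
            leibniz := ?_
            sq_zero := ?_
            out_zero := ?_ }, ⟨?_, ?_⟩, ⟨(0, 1), p.M.zero_mem, p.M.one_mem, by ring⟩, ?_, ?_⟩
  · rintro x y ⟨⟨u, v⟩, hu, hv, rfl⟩ ⟨⟨u', v'⟩, hu', hv', rfl⟩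
    refine ⟨(u * u' + v * v' * t ^ 2, u * v' + u' * v),
      p.M.add_mem (p.M.mul_mem hu hu') (p.M.mul_mem (p.M.mul_mem hv hv') htsq),
      p.M.add_mem (p.M.mul_mem hu hv') (p.M.mul_mem hu' hv), by ring⟩
  · rintro x y ⟨⟨u, v⟩, hu, hv, rfl⟩ ⟨⟨u', v'⟩, hu', hv', rfl⟩
    exact ⟨(u + u', v + v'), p.M.add_mem hu hu', p.M.add_mem hv hv', by ring⟩
  · rintro x ⟨⟨u, v⟩, hu, hv, rfl⟩
    exact ⟨(-u, -v), p.M.neg_mem hu, p.M.neg_mem hv, by ring⟩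
  · rintro x ⟨⟨u, v⟩, hu, hv, rfl⟩
    by_cases hx : u + v * t = 0
    · exact ⟨(0, 0), p.M.zero_mem, p.M.zero_mem, by rw [hx]; simp⟩
    · set w := ((u + v * t) ^ 2)⁻¹ with hw
      have hwm : w ∈ p.M := by
        have h1 : (u + v * t) ^ 2 ∈ p.M := p.sq_mem _
        exact p.M.inv_mem h1
      refine ⟨(u * w, v * w), p.M.mul_mem hu hwm, p.M.mul_mem hv hwm, ?_⟩
      have hsq : ((u + v * t) ^ 2) ≠ 0 := pow_ne_zero _ hx
      field_simp [hw]
      linear_combination (-1 : F) * (inv_mul_cancel₀ hsq)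
  · rintro x ⟨⟨u, v⟩, hu, hv, rfl⟩ y ⟨⟨u', v'⟩, hu', hv', rfl⟩
    have e1 : u + v * t + (u' + v' * t) = (u + u') + (v + v') * t := by ring
    rw [e1, Dext_spec p t c ht (p.M.add_mem hu hu') (p.M.add_mem hv hv'),
      Dext_spec p t c ht hu hv, Dext_spec p t c ht hu' hv',
      p.map_add u hu u' hu', p.map_add v hv v' hv']
    ring
  · rintro x ⟨⟨u, v⟩, hu, hv, rfl⟩ y ⟨⟨u', v'⟩, hu', hv', rfl⟩
    have e1 : (u + v * t) * (u' + v' * t)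
        = (u * u' + v * v' * t ^ 2) + (u * v' + u' * v) * t := by ring
    rw [e1, Dext_spec p t c ht
        (p.M.add_mem (p.M.mul_mem hu hu') (p.M.mul_mem (p.M.mul_mem hv hv') htsq))
        (p.M.add_mem (p.M.mul_mem hu hv') (p.M.mul_mem hu' hv)),
      Dext_spec p t c ht hu hv, Dext_spec p t c ht hu' hv',
      p.map_add _ (p.M.mul_mem hu hu') _ (p.M.mul_mem (p.M.mul_mem hv hv') htsq),
      p.leibniz u hu u' hu',
      p.leibniz _ (p.M.mul_mem hv hv') _ htsq,
      p.leibniz v hv v' hv',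
      p.map_add _ (p.M.mul_mem hu hv') _ (p.M.mul_mem hu' hv),
      p.leibniz u hu v' hv', p.leibniz u' hu' v hv,
      p.sq_zero t]
    have h2 : (2 : F) = 0 := CS.two_zero
    linear_combination (-(v * v' * t * c)) * h2
  · intro s
    have e1 : (s : F) ^ 2 = s ^ 2 + (0 : F) * t := by ring
    rw [e1, Dext_spec p t c ht (p.sq_mem s) p.M.zero_mem, p.sq_zero s, p.d_zero]
    ring
  · intro x hx
    have hx' : ¬ x ∈ S p t := hx
    simp only [Dext]
    rw [dif_neg hx']
  · intro x hx
    exact ⟨(x, 0), hx, p.M.zero_mem, by ring⟩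
  · intro x hx
    have h := Dext_spec p t c ht hx p.M.zero_mem
    simpa [p.d_zero] using h
  · have h := Dext_spec p t c ht p.M.zero_mem p.M.one_mem
    simpa [p.d_zero, p.d_one] using h
  · rintro x ⟨⟨u, v⟩, hu, hv, rfl⟩
    exact ⟨u, v, hu, hv, rfl⟩

open Classical in
/-- Every partial derivation extends to a total derivation. -/
theorem to_total (p : PDer F) : ∃ D : F → F, IsDer D ∧ ∀ x ∈ p.M, D x = p.D x := by
  have ih : ∀ c ⊆ (Set.univ : Set (PDer F)), IsChain (· ≤ ·) c → ∀ y ∈ c,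
      ∃ ub ∈ (Set.univ : Set (PDer F)), ∀ z ∈ c, z ≤ ub := by
    intro c hsub hchain y hy
    have key : ∀ (x : F), x ∈ {x | ∃ q ∈ c, x ∈ q.M} → ∀ (x' : F),
        x' ∈ {x | ∃ q ∈ c, x ∈ q.M} → ∃ r ∈ c, x ∈ r.M ∧ x' ∈ r.M := by
      rintro x ⟨q, hq, hxq⟩ x' ⟨q', hq', hxq'⟩
      rcases hchain.total hq hq' with h | h
      · exact ⟨q', hq', h.1 hxq, hxq'⟩
      · exact ⟨q, hq, hxq, h.1 hxq'⟩
    set MU : Subfield F :=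
      { carrier := {x | ∃ q ∈ c, x ∈ q.M}
        one_mem' := ⟨y, hy, Subfield.one_mem _⟩
        zero_mem' := ⟨y, hy, Subfield.zero_mem _⟩
        mul_mem' := by
          rintro x x' hx hx'
          obtain ⟨r, hr, h1, h2⟩ := key x hx x' hx'
          exact ⟨r, hr, r.M.mul_mem h1 h2⟩
        add_mem' := by
          rintro x x' hx hx'
          obtain ⟨r, hr, h1, h2⟩ := key x hx x' hx'
          exact ⟨r, hr, r.M.add_mem h1 h2⟩
        neg_mem' := by
          rintro x ⟨q, hq, hxq⟩
          exact ⟨q, hq, q.M.neg_mem hxq⟩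
        inv_mem' := by
          rintro x ⟨q, hq, hxq⟩
          exact ⟨q, hq, q.M.inv_mem hxq⟩ } with hMU
    set DU : F → F := fun x => if hx : ∃ q ∈ c, x ∈ q.M then hx.choose.D x else 0 with hDU
    have agree : ∀ q ∈ c, ∀ x ∈ q.M, DU x = q.D x := by
      intro q hq x hx
      have hex : ∃ q ∈ c, x ∈ q.M := ⟨q, hq, hx⟩
      have h1 : DU x = hex.choose.D x := by
        simp only [hDU]
        rw [dif_pos hex]
      obtain ⟨hc1, hc2⟩ := hex.choose_spec
      rcases hchain.total hc1 hq with h | h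
      · rw [h1, ← h.2 x hc2]
      · rw [h1, h.2 x hx]
    refine ⟨{ M := MU, D := DU
              sq_mem := fun s => ⟨y, hy, y.sq_mem s⟩
              map_add := ?_, leibniz := ?_, sq_zero := ?_, out_zero := ?_ }, trivial, ?_⟩
    · intro x hx x' hx'
      obtain ⟨r, hr, h1, h2⟩ := key x hx x' hx'
      rw [agree r hr x h1, agree r hr x' h2, agree r hr _ (r.M.add_mem h1 h2),
        r.map_add x h1 x' h2]
    · intro x hx x' hx'
      obtain ⟨r, hr, h1, h2⟩ := key x hx x' hx'
      rw [agree r hr x h1, agree r hr x' h2, agree r hr _ (r.M.mul_mem h1 h2),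
        r.leibniz x h1 x' h2]
    · intro s
      rw [agree y hy _ (y.sq_mem s), y.sq_zero s]
    · intro x hx
      have hx' : ¬ ∃ q ∈ c, x ∈ q.M := hx
      simp only [hDU]
      rw [dif_neg hx']
    · intro z hz
      exact ⟨fun x hx => ⟨z, hz, hx⟩, fun x hx => agree z hz x hx⟩
  obtain ⟨m, hpm, hmax⟩ := zorn_le_nonempty₀ (Set.univ : Set (PDer F)) ih p trivial
  have htot : ∀ t : F, t ∈ m.M := by
    intro t
    by_contra ht
    obtain ⟨q, hmq, htq, -, -⟩ := m.extend t ht 0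
    exact ht ((hmax.2 trivial hmq).1 htq)
  refine ⟨m.D, ⟨fun x y => m.map_add x (htot x) y (htot y),
    fun x y => m.leibniz x (htot x) y (htot y)⟩, fun x hx => hpm.2 x hx⟩

end PDer

end CS


namespace CS

/-- `1, a, b, ab` are linearly independent over the squares. -/
def Indep4 (a b : F) : Prop :=
  ∀ s t u v : F, s ^ 2 + t ^ 2 * a + u ^ 2 * b + v ^ 2 * (a * b) = 0 →
    s = 0 ∧ t = 0 ∧ u = 0 ∧ v = 0

/-- `a, b, ab` are linearly independent over the squares. -/
def Indep3 (a b : F) : Prop :=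
  ∀ s t u : F, s ^ 2 * a + t ^ 2 * b + u ^ 2 * (a * b) = 0 →
    s = 0 ∧ t = 0 ∧ u = 0

theorem exists_der_pair (a b : F) (I : Indep4 a b) (ca cb : F) :
    ∃ D : F → F, IsDer D ∧ D a = ca ∧ D b = cb := by
  have hp0M := PDer.bot_mem_iff (F := F)
  set p0 := PDer.bot F
  have ha : a ∉ p0.M := by
    rw [hp0M]
    rintro ⟨s, rfl⟩
    exact one_ne_zero (I s 1 0 0 (by linear_combination c2 (s ^ 2))).2.1
  obtain ⟨p1, hle1, haM, haD, hrep1⟩ := p0.extend a ha ca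
  have hb : b ∉ p1.M := by
    intro hmem
    obtain ⟨u, v, hu, hv, huv⟩ := hrep1 b hmem
    obtain ⟨s, rfl⟩ := (hp0M u).1 hu
    obtain ⟨t, rfl⟩ := (hp0M v).1 hv
    exact one_ne_zero (I s t 1 0 (by linear_combination huv + c2 (s ^ 2) + c2 (t ^ 2 * a))).2.2.1
  obtain ⟨p2, hle2, hbM, hbD, hrep2⟩ := p1.extend b hb cb
  obtain ⟨D, hD, hagree⟩ := p2.to_total
  refine ⟨D, hD, ?_, ?_⟩
  · rw [hagree a (hle2.1 haM), hle2.2 a haM, haD]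
  · rw [hagree b hbM, hbD]

theorem exists_der_triple (a b e : F) (I : Indep4 a b)
    (he : ¬ ∃ s t u v : F, e = s ^ 2 + t ^ 2 * a + u ^ 2 * b + v ^ 2 * (a * b))
    (ca cb ce : F) :
    ∃ D : F → F, IsDer D ∧ D a = ca ∧ D b = cb ∧ D e = ce := by
  have hp0M := PDer.bot_mem_iff (F := F)
  set p0 := PDer.bot F
  have ha : a ∉ p0.M := by
    rw [hp0M]
    rintro ⟨s, rfl⟩
    exact one_ne_zero (I s 1 0 0 (by linear_combination c2 (s ^ 2))).2.1
  obtain ⟨p1, hle1, haM, haD, hrep1⟩ := p0.extend a ha ca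
  have hb : b ∉ p1.M := by
    intro hmem
    obtain ⟨u, v, hu, hv, huv⟩ := hrep1 b hmem
    obtain ⟨s, rfl⟩ := (hp0M u).1 hu
    obtain ⟨t, rfl⟩ := (hp0M v).1 hv
    exact one_ne_zero (I s t 1 0 (by linear_combination huv + c2 (s ^ 2) + c2 (t ^ 2 * a))).2.2.1
  obtain ⟨p2, hle2, hbM, hbD, hrep2⟩ := p1.extend b hb cb
  have heM : e ∉ p2.M := by
    intro hmem
    obtain ⟨u, v, hu, hv, huv⟩ := hrep2 e hmem
    obtain ⟨u1, u2, hu1, hu2, rfl⟩ := hrep1 u hu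
    obtain ⟨v1, v2, hv1, hv2, rfl⟩ := hrep1 v hv
    obtain ⟨s, rfl⟩ := (hp0M u1).1 hu1
    obtain ⟨t, rfl⟩ := (hp0M u2).1 hu2
    obtain ⟨w, rfl⟩ := (hp0M v1).1 hv1
    obtain ⟨x, rfl⟩ := (hp0M v2).1 hv2
    exact he ⟨s, t, w, x, by linear_combination huv⟩
  obtain ⟨p3, hle3, heM3, heD, -⟩ := p2.extend e heM ce
  obtain ⟨D, hD, hagree⟩ := p3.to_total
  refine ⟨D, hD, ?_, ?_, ?_⟩
  · rw [hagree a (hle3.1 (hle2.1 haM)), hle3.2 a (hle2.1 haM), hle2.2 a haM, haD]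
  · rw [hagree b (hle3.1 hbM), hle3.2 b hbM, hbD]
  · rw [hagree e heM3, heD]

theorem indep4_of_indep3 {a b : F} (ha : a ≠ 0) (hb : b ≠ 0) (I : Indep3 a b) :
    Indep4 a b := by
  intro s t u v h
  have hs : s = 0 := by
    by_contra hs
    have h1 : 1 + (t / s) ^ 2 * a + (u / s) ^ 2 * b + (v / s) ^ 2 * (a * b) = 0 := by
      have hs2 : (s : F) ^ 2 ≠ 0 := pow_ne_zero _ hs
      apply mul_left_cancel₀ hs2
      rw [mul_zero]
      field_simp
      linear_combination h
    set β := t / s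
    set γ := u / s
    set δ := v / s
    have hrel : (γ * b + δ * β * (a * b)) ^ 2 * a + (β * a + δ * γ * (a * b)) ^ 2 * b
        + (1 + δ ^ 2 * (a * b)) ^ 2 * (a * b) = 0 := by
      linear_combination (a * b + δ ^ 2 * a ^ 2 * b ^ 2) * h1 +
        (2 * a ^ 2 * b ^ 2 * β * γ * δ) * (CS.two_zero (F := F))
    obtain ⟨-, -, hC⟩ := I _ _ _ hrel
    have hδ : δ ≠ 0 := by
      intro h0
      rw [h0] at hC
      simp at hC
    have hδa : δ ^ 2 * (a * b) = 1 := by linear_combination hC - c2 (1 : F)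
    have e1 : (1 / (δ * a)) ^ 2 * a = b := by
      rw [div_pow, one_pow, div_mul_eq_mul_div, eq_comm,
        eq_div_iff (pow_ne_zero _ (mul_ne_zero hδ ha))]
      linear_combination a * hδa
    have hrel2 : (1 / (δ * a)) ^ 2 * a + (1 : F) ^ 2 * b + (0 : F) ^ 2 * (a * b) = 0 := by
      rw [e1]
      linear_combination c2 b
    exact one_ne_zero (I _ _ _ hrel2).2.1
  subst hs
  have h3 : t ^ 2 * a + u ^ 2 * b + v ^ 2 * (a * b) = 0 := by linear_combination h
  obtain ⟨h1', h2', h3'⟩ := I t u v h3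
  exact ⟨rfl, h1', h2', h3'⟩

noncomputable def Wf (D₁ D₂ : F → F) (x y : F) : F :=
  (D₁ x * D₂ y + D₂ x * D₁ y) / (x * y)

theorem der_span {D : F → F} (hD : IsDer D) (p q r s a b : F) :
    D (p ^ 2 + q ^ 2 * a + r ^ 2 * b + s ^ 2 * (a * b))
      = q ^ 2 * D a + r ^ 2 * D b + s ^ 2 * (a * D b + b * D a) := by
  have h1 : D (q ^ 2 * a) = q ^ 2 * D a := by
    rw [hD.leibniz, hD.map_sq]; ring
  have h2 : D (r ^ 2 * b) = r ^ 2 * D b := by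
    rw [hD.leibniz, hD.map_sq]; ring
  have h3 : D (s ^ 2 * (a * b)) = s ^ 2 * (a * D b + b * D a) := by
    rw [hD.leibniz, hD.map_sq, hD.leibniz]; ring
  rw [hD.map_add, hD.map_add, hD.map_add, hD.map_sq, h1, h2, h3]
  ring

/-- If `{a,b} = {e,f}` holds after applying every derivation-pair invariant,
then `e` is represented by `⟨a, b, ab⟩` over the squares. -/
theorem slot_rep {a b e f : F} (ha : a ≠ 0) (hb : b ≠ 0) (he : e ≠ 0) (hf : f ≠ 0)
    (I : Indep4 a b)
    (H : ∀ D₁ D₂ : F → F, IsDer D₁ → IsDer D₂ → Wf D₁ D₂ a b = Wf D₁ D₂ e f) :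
    ∃ q r s : F, e = q ^ 2 * a + r ^ 2 * b + s ^ 2 * (a * b) := by
  have hab : a * b ≠ 0 := mul_ne_zero ha hb
  have hef : e * f ≠ 0 := mul_ne_zero he hf
  have hi : ∃ p q r s : F, e = p ^ 2 + q ^ 2 * a + r ^ 2 * b + s ^ 2 * (a * b) := by
    by_contra hne
    obtain ⟨D₁, hD₁, h1a, h1b, h1e⟩ := exists_der_triple a b e I hne 1 0 0
    obtain ⟨D₂, hD₂, h2a, h2b, h2e⟩ := exists_der_triple a b e I hne 0 1 0
    have h := H D₁ D₂ hD₁ hD₂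
    rw [Wf, Wf, h1a, h1b, h2a, h2b, h1e, h2e] at h
    rw [div_eq_div_iff hab hef] at h
    simp only [mul_zero, zero_mul, mul_one, one_mul, add_zero, zero_add] at h
    exact hef h
  obtain ⟨p, q, r, s, hrep⟩ := hi
  have hfi : ∃ p' q' r' s' : F, f = p' ^ 2 + q' ^ 2 * a + r' ^ 2 * b + s' ^ 2 * (a * b) := by
    by_contra hne
    obtain ⟨D₁, hD₁, h1a, h1b, h1f⟩ := exists_der_triple a b f I hne 1 0 0
    obtain ⟨D₂, hD₂, h2a, h2b, h2f⟩ := exists_der_triple a b f I hne 0 1 0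
    obtain ⟨D₃, hD₃, h3a, h3b, h3f⟩ := exists_der_triple a b f I hne 0 0 1
    have hD₁e : D₁ e = q ^ 2 + s ^ 2 * b := by
      rw [hrep, der_span hD₁, h1a, h1b]; ring
    have hD₂e : D₂ e = r ^ 2 + s ^ 2 * a := by
      rw [hrep, der_span hD₂, h2a, h2b]; ring
    have hD₃e : D₃ e = 0 := by
      rw [hrep, der_span hD₃, h3a, h3b]; ring
    have k1 := H D₁ D₃ hD₁ hD₃
    rw [Wf, Wf, h1a, h1b, h3a, h3b, h1f, h3f, hD₁e, hD₃e] at k1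
    rw [div_eq_div_iff hab hef] at k1
    have hqs : (q ^ 2 + s ^ 2 * b) = 0 := by
      have : (q ^ 2 + s ^ 2 * b) * (a * b) = 0 := by linear_combination -k1
      rcases mul_eq_zero.1 this with h' | h'
      · exact h'
      · exact absurd h' hab
    obtain ⟨hq, -, hs, -⟩ := I q 0 s 0 (by linear_combination hqs)
    have k2 := H D₂ D₃ hD₂ hD₃
    rw [Wf, Wf, h2a, h2b, h3a, h3b, h2f, h3f, hD₂e, hD₃e] at k2
    rw [div_eq_div_iff hab hef] at k2
    have hrs : (r ^ 2 + s ^ 2 * a) = 0 := by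
      have : (r ^ 2 + s ^ 2 * a) * (a * b) = 0 := by linear_combination -k2
      rcases mul_eq_zero.1 this with h' | h'
      · exact h'
      · exact absurd h' hab
    obtain ⟨hr, -, -, -⟩ := I r s 0 0 (by linear_combination hrs)
    have k3 := H D₁ D₂ hD₁ hD₂
    rw [Wf, Wf, h1a, h1b, h2a, h2b, hD₁e, hD₂e] at k3
    rw [hq, hr, hs] at k3
    rw [div_eq_div_iff hab hef] at k3
    simp at k3
    rcases k3 with h' | h'
    · exact he h'
    · exact hf h'
  obtain ⟨p', q', r', s', hrepf⟩ := hfi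
  obtain ⟨D₁, hD₁, h1a, h1b⟩ := exists_der_pair a b I 1 0
  obtain ⟨D₂, hD₂, h2a, h2b⟩ := exists_der_pair a b I 0 1
  have hD₁e : D₁ e = q ^ 2 + s ^ 2 * b := by
    rw [hrep, der_span hD₁, h1a, h1b]; ring
  have hD₂e : D₂ e = r ^ 2 + s ^ 2 * a := by
    rw [hrep, der_span hD₂, h2a, h2b]; ring
  have hD₁f : D₁ f = q' ^ 2 + s' ^ 2 * b := by
    rw [hrepf, der_span hD₁, h1a, h1b]; ring
  have hD₂f : D₂ f = r' ^ 2 + s' ^ 2 * a := by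
    rw [hrepf, der_span hD₂, h2a, h2b]; ring
  have hE := H D₁ D₂ hD₁ hD₂
  rw [Wf, Wf, h1a, h1b, h2a, h2b, hD₁e, hD₂e, hD₁f, hD₂f] at hE
  rw [div_eq_div_iff hab hef] at hE
  rw [hrep, hrepf] at hE
  have key : (p * p' + q * q' * a + r * r' * b + s * s' * (a * b)) ^ 2
      + (q * p' + p * q') ^ 2 * a + (r * p' + p * r') ^ 2 * b
      + (s * p' + p * s') ^ 2 * (a * b) = 0 := by
    linear_combination hE + (2*b*p*r*p'*r' + 2*a*p*q*p'*q' + a*b*q*r*q'*r' +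
      2*a*b*p*s*p'*s' + a*b^2*r*s*r'*s' + a^2*b*q*s*q'*s' + a^2*b^2*s^2*s'^2) *
      (CS.two_zero (F := F))
  obtain ⟨hQ0, hQ1, hQ2, hQ3⟩ := I _ _ _ _ key
  have hp : p = 0 := by
    by_contra hp
    have hpe : p' * e = 0 := by
      rw [hrep]
      linear_combination p * hQ0 + (a * q) * hQ1 + (b * r) * hQ2 + (a * b * s) * hQ3 +
        (-(p * q * q' * a + p * r * r' * b + p * s * s' * (a * b))) * (CS.two_zero (F := F))
    have hp' : p' = 0 := by
      rcases mul_eq_zero.1 hpe with h' | h'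
      · exact h'
      · exact absurd h' he
    have hq' : q' = 0 := by
      have : p * q' = 0 := by rw [hp'] at hQ1; linear_combination hQ1
      rcases mul_eq_zero.1 this with h' | h'
      · exact absurd h' hp
      · exact h'
    have hr' : r' = 0 := by
      have : p * r' = 0 := by rw [hp'] at hQ2; linear_combination hQ2
      rcases mul_eq_zero.1 this with h' | h'
      · exact absurd h' hp
      · exact h'
    have hs' : s' = 0 := by
      have : p * s' = 0 := by rw [hp'] at hQ3; linear_combination hQ3
      rcases mul_eq_zero.1 this with h' | h'
      · exact absurd h' hp
      · exact h'
    apply hf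
    rw [hrepf, hp', hq', hr', hs']
    ring
  exact ⟨q, r, s, by rw [hrep, hp]; ring⟩

end CS


namespace CS

theorem Wf_mul_left {D₁ D₂ : F → F} (h₁ : IsDer D₁) (h₂ : IsDer D₂) {x x' y : F}
    (hx : x ≠ 0) (hx' : x' ≠ 0) (hy : y ≠ 0) :
    Wf D₁ D₂ (x * x') y = Wf D₁ D₂ x y + Wf D₁ D₂ x' y := by
  rw [Wf, Wf, Wf, h₁.leibniz x x', h₂.leibniz x x']
  field_simp
  ring

theorem Wf_comm {D₁ D₂ : F → F} (x y : F) : Wf D₁ D₂ x y = Wf D₁ D₂ y x := by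
  rw [Wf, Wf]
  rw [mul_comm x y]
  ring_nf

theorem Wf_steinberg {D₁ D₂ : F → F} (h₁ : IsDer D₁) (h₂ : IsDer D₂) {x y : F}
    (hxy : x + y = 1) : Wf D₁ D₂ x y = 0 := by
  have e1 : D₁ x + D₁ y = 0 := by rw [← h₁.map_add, hxy, h₁.map_one]
  have e2 : D₂ x + D₂ y = 0 := by rw [← h₂.map_add, hxy, h₂.map_one]
  have e1' : D₁ y = -D₁ x := eq_neg_of_add_eq_zero_right e1
  have e2' : D₂ y = -D₂ x := eq_neg_of_add_eq_zero_right e2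
  rw [Wf, e1', e2']
  have hnum : D₁ x * -D₂ x + D₂ x * -D₁ x = 0 := by
    linear_combination (-(D₁ x * D₂ x)) * (CS.two_zero (F := F))
  rw [hnum, zero_div]

/-- The symbol invariant attached to a pair of derivations. -/
noncomputable def phi0 (D₁ D₂ : F → F) : (Fin 2 → Fˣ) → F := fun u =>
  Wf D₁ D₂ (u 0 : Fˣ) (u 1 : Fˣ)

noncomputable def phiAb (D₁ D₂ : F → F) : FreeAbelianGroup (Fin 2 → Fˣ) →+ F :=
  FreeAbelianGroup.lift (phi0 D₁ D₂)

theorem rels_le_ker {D₁ D₂ : F → F} (h₁ : IsDer D₁) (h₂ : IsDer D₂) :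
    rels F 2 ≤ (phiAb D₁ D₂).ker := by
  rw [rels]
  rw [AddSubgroup.closure_le]
  rintro x (⟨i, u, v, w, hj, hw, rfl⟩ | ⟨i, j, u, hij, hu, rfl⟩)
  · have hofw : phiAb D₁ D₂ (FreeAbelianGroup.of w) = phi0 D₁ D₂ w :=
      FreeAbelianGroup.lift_apply_of _ _
    have hofu : phiAb D₁ D₂ (FreeAbelianGroup.of u) = phi0 D₁ D₂ u :=
      FreeAbelianGroup.lift_apply_of _ _
    have hofv : phiAb D₁ D₂ (FreeAbelianGroup.of v) = phi0 D₁ D₂ v :=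
      FreeAbelianGroup.lift_apply_of _ _
    have key : phi0 D₁ D₂ w = phi0 D₁ D₂ u + phi0 D₁ D₂ v := by
      fin_cases i
      · obtain ⟨h1, h2⟩ := hj 1 (by decide)
        have hw' : w 0 = u 0 * v 0 := hw
        rw [phi0, phi0, phi0, ← h2, ← h1, hw']
        push_cast
        exact Wf_mul_left h₁ h₂ (Units.ne_zero _) (Units.ne_zero _) (Units.ne_zero _)
      · obtain ⟨h1, h2⟩ := hj 0 (by decide)
        have hw' : w 1 = u 1 * v 1 := hw
        rw [phi0, phi0, phi0, ← h2, ← h1, hw']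
        push_cast
        rw [Wf_comm ((u 0 : Fˣ) : F), Wf_comm ((u 0 : Fˣ) : F) (u 1 : Fˣ),
          Wf_comm ((u 0 : Fˣ) : F) (v 1 : Fˣ)]
        exact Wf_mul_left h₁ h₂ (Units.ne_zero _) (Units.ne_zero _) (Units.ne_zero _)
    show _ ∈ (phiAb D₁ D₂).ker
    rw [AddMonoidHom.mem_ker, map_sub, map_sub, hofw, hofu, hofv, key]
    ring
  · show _ ∈ (phiAb D₁ D₂).ker
    rw [AddMonoidHom.mem_ker]
    have hof : phiAb D₁ D₂ (FreeAbelianGroup.of u) = phi0 D₁ D₂ u :=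
      FreeAbelianGroup.lift_apply_of _ _
    rw [hof, phi0]
    fin_cases i <;> fin_cases j
    · exact absurd rfl hij
    · exact Wf_steinberg h₁ h₂ hu
    · rw [Wf_comm]
      exact Wf_steinberg h₁ h₂ hu
    · exact absurd rfl hij

noncomputable def phiK {D₁ D₂ : F → F} (h₁ : IsDer D₁) (h₂ : IsDer D₂) : K F 2 →+ F :=
  QuotientAddGroup.lift (rels F 2) (phiAb D₁ D₂) (fun x hx => rels_le_ker h₁ h₂ hx)

theorem modSub_le_ker {D₁ D₂ : F → F} (h₁ : IsDer D₁) (h₂ : IsDer D₂) :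
    modSub F 2 1 ≤ (phiK h₁ h₂).ker := by
  rw [modSub, AddSubgroup.closure_le]
  rintro x ⟨y, rfl⟩
  show _ ∈ (phiK h₁ h₂).ker
  rw [AddMonoidHom.mem_ker, map_nsmul]
  have : (2 ^ 1 : ℕ) = 2 := by norm_num
  rw [this]
  have h2 : (2 : ℕ) • phiK h₁ h₂ y = (2 : F) * phiK h₁ h₂ y := by
    rw [nsmul_eq_mul]; norm_num
  rw [h2, CS.two_zero, zero_mul]

noncomputable def phiM {D₁ D₂ : F → F} (h₁ : IsDer D₁) (h₂ : IsDer D₂) :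
    KMod F 2 1 →+ F :=
  QuotientAddGroup.lift (modSub F 2 1) (phiK h₁ h₂) (fun x hx => modSub_le_ker h₁ h₂ hx)

theorem phiM_s2 {D₁ D₂ : F → F} (h₁ : IsDer D₁) (h₂ : IsDer D₂) {a b : F}
    (ha : a ≠ 0) (hb : b ≠ 0) :
    phiM h₁ h₂ (s2 1 a b) = Wf D₁ D₂ a b := by
  rw [s2, dif_pos ⟨ha, hb⟩]
  have : phiM h₁ h₂ (symbol 1 ![Units.mk0 a ha, Units.mk0 b hb])
      = phi0 D₁ D₂ ![Units.mk0 a ha, Units.mk0 b hb] := by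
    rw [symbol, phiM]
    erw [QuotientAddGroup.lift_mk]
    rw [phiK]
    erw [QuotientAddGroup.lift_mk]
    exact FreeAbelianGroup.lift_apply_of _ _
  rw [this, phi0]
  simp [Matrix.cons_val_zero, Matrix.cons_val_one]

end CS

end CommonSlot

open CS in
/-- if the Albert form `⟨a,b,ab,c,d,cd⟩` is anisotropic, then the
symbols `{a,b}₂` and `{c,d}₂` have no common slot. -/
theorem stmt6 (F : Type*) [Field F] [CharP F 2] (a b c d : F)
    (ha : a ≠ 0) (hb : b ≠ 0) (hc : c ≠ 0) (hd : d ≠ 0)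
    (haniso : ∀ x : Fin 6 → F,
      a * x 0 ^ 2 + b * x 1 ^ 2 + a * b * x 2 ^ 2 +
        c * x 3 ^ 2 + d * x 4 ^ 2 + c * d * x 5 ^ 2 = 0 → x = 0) :
    ¬ ∃ e f g : F, e ≠ 0 ∧ f ≠ 0 ∧ g ≠ 0 ∧
      s2 1 a b = s2 1 e f ∧ s2 1 c d = s2 1 e g := by
  rintro ⟨e, f, g, he, hf, hg, h1, h2⟩
  have I3ab : Indep3 a b := by
    intro s t u h
    have h6 := haniso ![s, t, u, 0, 0, 0] (by
      show a * s ^ 2 + b * t ^ 2 + a * b * u ^ 2 + c * (0 : F) ^ 2 + d * (0 : F) ^ 2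
        + c * d * (0 : F) ^ 2 = 0
      linear_combination h)
    exact ⟨congrFun h6 0, congrFun h6 1, congrFun h6 2⟩
  have I3cd : Indep3 c d := by
    intro s t u h
    have h6 := haniso ![0, 0, 0, s, t, u] (by
      show a * (0 : F) ^ 2 + b * (0 : F) ^ 2 + a * b * (0 : F) ^ 2 + c * s ^ 2 + d * t ^ 2
        + c * d * u ^ 2 = 0
      linear_combination h)
    exact ⟨congrFun h6 3, congrFun h6 4, congrFun h6 5⟩
  have I4ab : Indep4 a b := indep4_of_indep3 ha hb I3ab
  have I4cd : Indep4 c d := indep4_of_indep3 hc hd I3cd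
  have H1 : ∀ D₁ D₂ : F → F, IsDer D₁ → IsDer D₂ → Wf D₁ D₂ a b = Wf D₁ D₂ e f := by
    intro D₁ D₂ hD₁ hD₂
    have := congrArg (phiM hD₁ hD₂) h1
    rwa [phiM_s2 hD₁ hD₂ ha hb, phiM_s2 hD₁ hD₂ he hf] at this
  have H2 : ∀ D₁ D₂ : F → F, IsDer D₁ → IsDer D₂ → Wf D₁ D₂ c d = Wf D₁ D₂ e g := by
    intro D₁ D₂ hD₁ hD₂
    have := congrArg (phiM hD₁ hD₂) h2
    rwa [phiM_s2 hD₁ hD₂ hc hd, phiM_s2 hD₁ hD₂ he hg] at this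
  obtain ⟨q, r, s, hrep1⟩ := slot_rep ha hb he hf I4ab H1
  obtain ⟨q', r', s', hrep2⟩ := slot_rep hc hd he hg I4cd H2
  have h6 := haniso ![q, r, s, q', r', s'] (by
    show a * q ^ 2 + b * r ^ 2 + a * b * s ^ 2 + c * q' ^ 2 + d * r' ^ 2
      + c * d * s' ^ 2 = 0
    linear_combination -hrep1 - hrep2 + c2 e)
  apply he
  rw [hrep1]
  have hq : q = 0 := congrFun h6 0
  have hr : r = 0 := congrFun h6 1
  have hs : s = 0 := congrFun h6 2
  rw [hq, hr, hs]
  ring
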